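/- Let V be a finite-dimensional real vector space with a Lorentzian (signature (n-1,1)) nondegenerate symmetric bilinear form g, and let F : V^4 → ℝ be a curvature-like map (i.e., F satisfies the symmetries of a Riemann curvature tensor: F(x,y,z,w)=F(z,w,x,y), F is antisymmetric in the first two and last two arguments, and satisfies the first Bianchi identity). Then F(x,y,z,w) = k(g(x,z)g(y,w) − g(y,z)g(x,w)) for some constant k ∈ ℝ and all x,y,z,w ∈ V if and only if F(x,y,x,y) = 0 for every pair of vectors x,y spanning a degenerate 2-plane (i.e., such that g(x,x)g(y,y) − g(x,y)² = 0 with x,y linearly independent). -/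

import Mathlib

/-- A symmetric bilinear form on a real vector space is *Lorentzian* if it admits an
orthonormal basis with exactly one timelike (norm `-1`) vector and all the others
spacelike (norm `+1`). -/
def IsLorentzian {V : Type*} [AddCommGroup V] [Module ℝ V]
    (g : V →ₗ[ℝ] V →ₗ[ℝ] ℝ) : Prop :=
  ∃ (n : ℕ) (b : Module.Basis (Fin (n + 1)) ℝ V), ∀ i j,
    g (b i) (b j) = if i = j then (if i = 0 then (-1 : ℝ) else 1) else 0

/-- A (multilinear) map `F : V⁴ → ℝ` is *curvature-like* if it satisfies the algebraic
symmetries of the Riemann curvature tensor. -/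
def IsCurvatureLike {V : Type*} [AddCommGroup V] [Module ℝ V]
    (F : V →ₗ[ℝ] V →ₗ[ℝ] V →ₗ[ℝ] V →ₗ[ℝ] ℝ) : Prop :=
  (∀ x y z w, F x y z w = F z w x y) ∧
  (∀ x y z w, F x y z w = - F y x z w) ∧
  (∀ x y z w, F x y z w = - F x y w z) ∧
  (∀ x y z w, F x y z w + F y z x w + F z x y w = 0)

set_option maxHeartbeats 3000000 in
theorem curvatureLike_const_iff_vanishes_on_degenerate_planes
    {V : Type*} [AddCommGroup V] [Module ℝ V] [FiniteDimensional ℝ V]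
    (g : V →ₗ[ℝ] V →ₗ[ℝ] ℝ) (hgsymm : ∀ x y, g x y = g y x)
    (hgL : IsLorentzian g)
    (F : V →ₗ[ℝ] V →ₗ[ℝ] V →ₗ[ℝ] V →ₗ[ℝ] ℝ) (hF : IsCurvatureLike F) :
    (∃ k : ℝ, ∀ x y z w : V,
        F x y z w = k * (g x z * g y w - g y z * g x w)) ↔
    (∀ x y : V, LinearIndependent ℝ ![x, y] →
        g x x * g y y - (g x y) ^ 2 = 0 → F x y x y = 0) := by
  obtain ⟨hsym, ha1, ha2, hbi⟩ := hF
  constructor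
  · rintro ⟨k, hk⟩ x y _ hdeg
    rw [hk]
    have h := hgsymm x y
    linear_combination k * hdeg + k * (g x y) * h
  · intro hvan
    obtain ⟨n, b, hb⟩ := hgL
    -- generic facts about F
    have hxx : ∀ x z w : V, F x x z w = 0 := by
      intro x z w; have := ha1 x x z w; linarith
    have hzz : ∀ x y z : V, F x y z z = 0 := by
      intro x y z; have := ha2 x y z z; linarith
    have hswapboth : ∀ x y z w : V, F x y z w = F y x w z := by
      intro x y z w; have h1 := ha1 x y z w; have h2 := ha2 y x z w; linarith
    -- vanishing on degenerate pairs, without independence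
    have hvan' : ∀ x y : V, g x x = 0 → g x y = 0 → F x y x y = 0 := by
      intro x y h1 h2
      by_cases hind : LinearIndependent ℝ ![x, y]
      · exact hvan x y hind (by rw [h1, h2]; ring)
      · rw [LinearIndependent.pair_iff] at hind
        push_neg at hind
        obtain ⟨s, t, hst, hne⟩ := hind
        rcases eq_or_ne t 0 with ht | ht
        · subst ht
          have hs : s ≠ 0 := fun h => hne h rfl
          have hx0 : x = 0 := by
            have : s • x = 0 := by simpa using hst
            simpa [hs] using smul_eq_zero.mp this
          simp [hx0]
        · have hty : t • y = -(s • x) := by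
            rw [eq_neg_iff_add_eq_zero, add_comm]; exact hst
          have h3 : t * F x y x y = 0 := by
            have : F x (t • y) x y = F x (-(s • x)) x y := by rw [hty]
            simpa [map_smul, map_neg, hxx, smul_eq_mul] using this
          exact (mul_eq_zero.mp h3).resolve_left ht
    -- polarized version
    have H2 : ∀ x y z : V, g x x = 0 → g x y = 0 → g x z = 0 → F x y x z = 0 := by
      intro x y z hx hy hz
      have h := hvan' x (y + z) hx (by rw [map_add, hy, hz]; ring)
      have hyz : F x z x y = F x y x z := by rw [hsym]
      have h1 := hvan' x y hx hy
      have h2 := hvan' x z hx hz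
      simp only [map_add, LinearMap.add_apply] at h
      linarith
    rcases n with _ | m
    · -- one-dimensional case: F vanishes identically
      refine ⟨0, fun x y z w => ?_⟩
      have hx : (b.repr x 0) • b 0 = x := by
        simpa using b.sum_repr x
      have hy : (b.repr y 0) • b 0 = y := by
        simpa using b.sum_repr y
      rw [← hx, ← hy]
      simp [LinearMap.map_smul, LinearMap.smul_apply, hxx, smul_eq_mul]
    · -- main case, dimension ≥ 2
      have hAB : ∀ i j k : Fin (m + 2), i ≠ 0 → j ≠ 0 → k ≠ 0 → i ≠ j → i ≠ k →
          (F (b 0) (b j) (b 0) (b k) + F (b i) (b j) (b i) (b k) = 0 ∧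
           F (b 0) (b j) (b i) (b k) + F (b i) (b j) (b 0) (b k) = 0) := by
        intro i j k hi hj hk hij hik
        have hu : g (b 0 + b i) (b 0 + b i) = 0 := by
          simp [map_add, LinearMap.add_apply, hb, hi, Ne.symm hi]
        have hu' : g (b 0 - b i) (b 0 - b i) = 0 := by
          simp [map_sub, LinearMap.sub_apply, hb, hi, Ne.symm hi]
        have huy : g (b 0 + b i) (b j) = 0 := by
          simp [map_add, LinearMap.add_apply, hb, Ne.symm hj, hij]
        have huz : g (b 0 + b i) (b k) = 0 := by
          simp [map_add, LinearMap.add_apply, hb, Ne.symm hk, hik]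
        have hu'y : g (b 0 - b i) (b j) = 0 := by
          simp [map_sub, LinearMap.sub_apply, hb, Ne.symm hj, hij]
        have hu'z : g (b 0 - b i) (b k) = 0 := by
          simp [map_sub, LinearMap.sub_apply, hb, Ne.symm hk, hik]
        have h1 := H2 _ _ _ hu huy huz
        have h2 := H2 _ _ _ hu' hu'y hu'z
        rw [sub_eq_add_neg (b 0) (b i), ← neg_one_smul ℝ (b i)] at h2
        simp only [map_add, map_sub, map_smul, LinearMap.add_apply, LinearMap.sub_apply,
          LinearMap.smul_apply, smul_eq_mul] at h1 h2
        constructor <;> linarith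
      set K : ℝ := - F (b 0) (b 1) (b 0) (b 1) with hK
      have h10 : (1 : Fin (m + 2)) ≠ 0 := Ne.symm Fin.zero_ne_one
      -- diagonal values P_pp
      have hP : ∀ p : Fin (m + 2), p ≠ 0 → F (b 0) (b p) (b 0) (b p) = -K := by
        intro p hp
        rcases eq_or_ne p 1 with h1 | h1
        · rw [h1, hK]; ring
        · have e1 := (hAB 1 p p h10 hp hp (Ne.symm h1) (Ne.symm h1)).1
          have e2 := (hAB p 1 1 hp h10 h10 h1 h1).1
          have e3 := hswapboth (b 1) (b p) (b 1) (b p)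
          rw [hK]; linarith
      have hR : ∀ p q : Fin (m + 2), p ≠ 0 → q ≠ 0 → p ≠ q →
          F (b p) (b q) (b p) (b q) = K := by
        intro p q hp hq hpq
        have e1 := (hAB p q q hp hq hq hpq hpq).1
        have e2 := hP q hq
        linarith
      have hM1 : ∀ p q : Fin (m + 2), p ≠ 0 → q ≠ 0 → p ≠ q →
          F (b 0) (b q) (b p) (b q) = 0 := by
        intro p q hp hq hpq
        have e1 := (hAB p q q hp hq hq hpq hpq).2
        have e2 : F (b p) (b q) (b 0) (b q) = F (b 0) (b q) (b p) (b q) := hsym _ _ _ _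
        linarith
      have hPM : ∀ p q : Fin (m + 2), p ≠ 0 → q ≠ 0 → p ≠ q →
          (F (b 0) (b p) (b 0) (b q) = 0 ∧ F (b 0) (b p) (b p) (b q) = 0) := by
        intro p q hp hq hpq
        have hqp : q ≠ p := Ne.symm hpq
        have hgu : g ((5:ℝ) • b 0 + ((3:ℝ) • b p + (4:ℝ) • b q))
            ((5:ℝ) • b 0 + ((3:ℝ) • b p + (4:ℝ) • b q)) = 0 := by
          simp [map_add, map_smul, LinearMap.add_apply, LinearMap.smul_apply, hb,
            hp, hq, hpq, hqp, Ne.symm hp, Ne.symm hq, smul_eq_mul]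
          ring
        have hgu' : g ((5:ℝ) • b 0 - ((3:ℝ) • b p + (4:ℝ) • b q))
            ((5:ℝ) • b 0 - ((3:ℝ) • b p + (4:ℝ) • b q)) = 0 := by
          simp [map_add, map_sub, map_smul, LinearMap.add_apply, LinearMap.sub_apply,
            LinearMap.smul_apply, hb, hp, hq, hpq, hqp, Ne.symm hp, Ne.symm hq, smul_eq_mul]
          ring
        have hguy : g ((5:ℝ) • b 0 + ((3:ℝ) • b p + (4:ℝ) • b q))
            ((4:ℝ) • b p - (3:ℝ) • b q) = 0 := by
          simp [map_add, map_sub, map_smul, LinearMap.add_apply, LinearMap.sub_apply,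
            LinearMap.smul_apply, hb, hp, hq, hpq, hqp, Ne.symm hp, Ne.symm hq, smul_eq_mul]
          ring
        have hgu'y : g ((5:ℝ) • b 0 - ((3:ℝ) • b p + (4:ℝ) • b q))
            ((4:ℝ) • b p - (3:ℝ) • b q) = 0 := by
          simp [map_add, map_sub, map_smul, LinearMap.add_apply, LinearMap.sub_apply,
            LinearMap.smul_apply, hb, hp, hq, hpq, hqp, Ne.symm hp, Ne.symm hq, smul_eq_mul]
          ring
        have h1 := H2 _ _ _ hgu hguy hguy
        have h2 := H2 _ _ _ hgu' hgu'y hgu'y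
        rw [sub_eq_add_neg ((5:ℝ) • b 0), ← neg_one_smul ℝ ((3:ℝ) • b p + (4:ℝ) • b q)] at h2
        simp only [map_add, map_sub, map_smul, LinearMap.add_apply, LinearMap.sub_apply,
          LinearMap.smul_apply, smul_eq_mul, hxx, hzz, mul_zero, zero_mul, add_zero,
          zero_add, sub_zero, zero_sub, mul_neg, neg_zero] at h1 h2
        have v1 : F (b 0) (b q) (b 0) (b p) = F (b 0) (b p) (b 0) (b q) := hsym _ _ _ _
        have v2 : F (b q) (b p) (b q) (b p) = F (b p) (b q) (b p) (b q) :=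
          (hswapboth _ _ _ _).symm
        have v3 : F (b p) (b q) (b q) (b p) = - F (b p) (b q) (b p) (b q) := ha2 _ _ _ _
        have v4 : F (b q) (b p) (b p) (b q) = - F (b p) (b q) (b p) (b q) := ha1 _ _ _ _
        have v5 : F (b p) (b q) (b 0) (b p) = F (b 0) (b p) (b p) (b q) := hsym _ _ _ _
        have v6 : F (b 0) (b p) (b q) (b p) = - F (b 0) (b p) (b p) (b q) := ha2 _ _ _ _
        have v7 : F (b q) (b p) (b 0) (b p) = - F (b 0) (b p) (b p) (b q) := by
          have := hsym (b q) (b p) (b 0) (b p); linarith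
        have v8 : F (b 0) (b q) (b p) (b q) = 0 := hM1 p q hp hq hpq
        have v9 : F (b p) (b q) (b 0) (b q) = 0 := by
          have := hsym (b p) (b q) (b 0) (b q); linarith
        have v10 : F (b 0) (b q) (b q) (b p) = 0 := by
          have := ha2 (b 0) (b q) (b q) (b p); linarith
        have v11 : F (b q) (b p) (b 0) (b q) = 0 := by
          have := hsym (b q) (b p) (b 0) (b q); linarith
        have vP1 := hP p hp
        have vP2 := hP q hq
        have vR := hR p q hp hq hpq
        constructor <;> linarith
      have hR' : ∀ p q r : Fin (m + 2), p ≠ 0 → q ≠ 0 → r ≠ 0 → p ≠ q → p ≠ r → q ≠ r →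
          F (b p) (b q) (b p) (b r) = 0 := by
        intro p q r hp hq hr hpq hpr hqr
        have e1 := (hAB p q r hp hq hr hpq hpr).1
        have e2 := (hPM q r hq hr hqr).1
        linarith
      have hM3 : ∀ p q r : Fin (m + 2), p ≠ 0 → q ≠ 0 → r ≠ 0 → p ≠ q → p ≠ r → q ≠ r →
          F (b 0) (b p) (b q) (b r) = 0 := by
        intro p q r hp hq hr hpq hpr hqr
        -- atoms m_{j,i,k} = F (b 0) (b j) (b i) (b k), (j,i,k) a permutation of (p,q,r)
        have B1 : F (b 0) (b q) (b p) (b r) + F (b 0) (b r) (b p) (b q) = 0 := by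
          have e := (hAB p q r hp hq hr hpq hpr).2
          have := hsym (b p) (b q) (b 0) (b r); linarith
        have B2 : F (b 0) (b p) (b q) (b r) + F (b 0) (b r) (b q) (b p) = 0 := by
          have e := (hAB q p r hq hp hr (Ne.symm hpq) hqr).2
          have := hsym (b q) (b p) (b 0) (b r); linarith
        have B3 : F (b 0) (b p) (b r) (b q) + F (b 0) (b q) (b r) (b p) = 0 := by
          have e := (hAB r p q hr hp hq (Ne.symm hpr) (Ne.symm hqr)).2
          have := hsym (b r) (b p) (b 0) (b q); linarith
        have Bi1 : F (b 0) (b q) (b p) (b r) + F (b 0) (b r) (b q) (b p)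
            - F (b 0) (b p) (b q) (b r) = 0 := by
          have e := hbi (b 0) (b q) (b p) (b r)
          have e2 := hsym (b q) (b p) (b 0) (b r)
          have e3 := ha1 (b p) (b 0) (b q) (b r)
          linarith
        have Bi2 : F (b 0) (b p) (b q) (b r) + F (b 0) (b r) (b p) (b q)
            - F (b 0) (b q) (b p) (b r) = 0 := by
          have e := hbi (b 0) (b p) (b q) (b r)
          have e2 := hsym (b p) (b q) (b 0) (b r)
          have e3 := ha1 (b q) (b 0) (b p) (b r)
          linarith
        have Bi3 : F (b 0) (b p) (b r) (b q) + F (b 0) (b q) (b p) (b r)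
            - F (b 0) (b r) (b p) (b q) = 0 := by
          have e := hbi (b 0) (b p) (b r) (b q)
          have e2 := hsym (b p) (b r) (b 0) (b q)
          have e3 := ha1 (b r) (b 0) (b p) (b q)
          linarith
        linarith
      have hE : ∀ p q r s : Fin (m + 2), p ≠ 0 → q ≠ 0 → r ≠ 0 → s ≠ 0 →
          p ≠ q → p ≠ r → p ≠ s → q ≠ r → q ≠ s → r ≠ s →
          F (b p) (b r) (b q) (b s) + F (b q) (b r) (b p) (b s) = 0 := by
        intro p q r s hp hq hr hs hpq hpr hps hqr hqs hrs
        have hqp : q ≠ p := Ne.symm hpq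
        have hgu : g ((5:ℝ) • b 0 + ((3:ℝ) • b p + (4:ℝ) • b q))
            ((5:ℝ) • b 0 + ((3:ℝ) • b p + (4:ℝ) • b q)) = 0 := by
          simp [map_add, map_smul, LinearMap.add_apply, LinearMap.smul_apply, hb,
            hp, hq, hpq, hqp, Ne.symm hp, Ne.symm hq, smul_eq_mul]
          ring
        have hgu' : g ((5:ℝ) • b 0 - ((3:ℝ) • b p + (4:ℝ) • b q))
            ((5:ℝ) • b 0 - ((3:ℝ) • b p + (4:ℝ) • b q)) = 0 := by
          simp [map_add, map_sub, map_smul, LinearMap.add_apply, LinearMap.sub_apply,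
            LinearMap.smul_apply, hb, hp, hq, hpq, hqp, Ne.symm hp, Ne.symm hq, smul_eq_mul]
          ring
        have hgur : g ((5:ℝ) • b 0 + ((3:ℝ) • b p + (4:ℝ) • b q)) (b r) = 0 := by
          simp [map_add, map_smul, LinearMap.add_apply, LinearMap.smul_apply, hb,
            Ne.symm hr, hpr, hqr]
        have hgus : g ((5:ℝ) • b 0 + ((3:ℝ) • b p + (4:ℝ) • b q)) (b s) = 0 := by
          simp [map_add, map_smul, LinearMap.add_apply, LinearMap.smul_apply, hb,
            Ne.symm hs, hps, hqs]
        have hgu'r : g ((5:ℝ) • b 0 - ((3:ℝ) • b p + (4:ℝ) • b q)) (b r) = 0 := by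
          simp [map_add, map_sub, map_smul, LinearMap.add_apply, LinearMap.sub_apply,
            LinearMap.smul_apply, hb, Ne.symm hr, hpr, hqr]
        have hgu's : g ((5:ℝ) • b 0 - ((3:ℝ) • b p + (4:ℝ) • b q)) (b s) = 0 := by
          simp [map_add, map_sub, map_smul, LinearMap.add_apply, LinearMap.sub_apply,
            LinearMap.smul_apply, hb, Ne.symm hs, hps, hqs]
        have h1 := H2 _ _ _ hgu hgur hgus
        have h2 := H2 _ _ _ hgu' hgu'r hgu's
        simp only [map_add, map_sub, map_smul, LinearMap.add_apply, LinearMap.sub_apply,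
          LinearMap.smul_apply, smul_eq_mul] at h1 h2
        have w1 : F (b 0) (b r) (b 0) (b s) = 0 := (hPM r s hr hs hrs).1
        have w2 : F (b 0) (b r) (b p) (b s) = 0 := hM3 r p s hr hp hs (Ne.symm hpr) hrs hps
        have w3 : F (b 0) (b r) (b q) (b s) = 0 := hM3 r q s hr hq hs (Ne.symm hqr) hrs hqs
        have w4 : F (b p) (b r) (b 0) (b s) = 0 := by
          have := hsym (b p) (b r) (b 0) (b s)
          have := hM3 s p r hs hp hr (Ne.symm hps) (Ne.symm hrs) hpr
          linarith
        have w5 : F (b q) (b r) (b 0) (b s) = 0 := by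
          have := hsym (b q) (b r) (b 0) (b s)
          have := hM3 s q r hs hq hr (Ne.symm hqs) (Ne.symm hrs) hqr
          linarith
        have w6 : F (b p) (b r) (b p) (b s) = 0 := hR' p r s hp hr hs hpr hps hrs
        have w7 : F (b q) (b r) (b q) (b s) = 0 := hR' q r s hq hr hs hqr hqs hrs
        linarith
      have hF7 : ∀ p q r s : Fin (m + 2), p ≠ 0 → q ≠ 0 → r ≠ 0 → s ≠ 0 →
          p ≠ q → p ≠ r → p ≠ s → q ≠ r → q ≠ s → r ≠ s →
          F (b p) (b q) (b r) (b s) = 0 := by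
        intro p q r s hp hq hr hs hpq hpr hps hqr hqs hrs
        have e1 := hE p r q s hp hr hq hs hpr hpq hps (Ne.symm hqr) hrs hqs
        have e2 := ha1 (b r) (b q) (b p) (b s)
        have e3 := hE q p r s hq hp hr hs (Ne.symm hpq) hqr hqs hpr hps hrs
        have e4 := hbi (b p) (b q) (b r) (b s)
        have e5 := ha1 (b r) (b p) (b q) (b s)
        linarith
      -- LHS vanishes whenever the index pattern is not a "diagonal" one
      have hzero : ∀ i j k l : Fin (m + 2), i ≠ j → k ≠ l → ¬(i = k ∧ j = l) →
          ¬(i = l ∧ j = k) → F (b i) (b j) (b k) (b l) = 0 := by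
        intro i j k l hij hkl hnc1 hnc2
        by_cases hi : i = 0
        · subst hi
          have hj : j ≠ 0 := Ne.symm hij
          by_cases hk : k = 0
          · subst hk
            have hl : l ≠ 0 := Ne.symm hkl
            have hjl : j ≠ l := fun h => hnc1 ⟨rfl, h⟩
            exact (hPM j l hj hl hjl).1
          · by_cases hl : l = 0
            · subst hl
              have hjk : j ≠ k := fun h => hnc2 ⟨rfl, h⟩
              have e1 := ha2 (b 0) (b j) (b k) (b 0)
              have e2 := (hPM j k hj hk hjk).1
              linarith
            · -- j, k, l all nonzero
              rcases eq_or_ne j k with rfl | hjk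
              · have hjl : j ≠ l := hkl
                exact (hPM j l hj hl hjl).2
              · rcases eq_or_ne j l with rfl | hjl
                · have e1 := ha2 (b 0) (b j) (b k) (b j)
                  have e2 := (hPM j k hj hk (Ne.symm hkl)).2
                  linarith
                · exact hM3 j k l hj hk hl hjk hjl hkl
        · by_cases hj : j = 0
          · subst hj
            -- move the 0 to the first slot
            by_cases hk : k = 0
            · subst hk
              have hl : l ≠ 0 := Ne.symm hkl
              have hil : i ≠ l := fun h => hnc2 ⟨h, rfl⟩
              have e1 := ha1 (b i) (b 0) (b 0) (b l)
              have e2 := (hPM i l hi hl hil).1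
              linarith
            · by_cases hl : l = 0
              · subst hl
                have hik : i ≠ k := fun h => hnc1 ⟨h, rfl⟩
                have e1 := hswapboth (b i) (b 0) (b k) (b 0)
                have e2 := (hPM i k hi hk hik).1
                linarith
              · have e1 := ha1 (b i) (b 0) (b k) (b l)
                rcases eq_or_ne i k with rfl | hik
                · have e2 := (hPM i l hi hl hkl).2
                  linarith
                · rcases eq_or_ne i l with rfl | hil
                  · have e2 := ha2 (b 0) (b i) (b k) (b i)
                    have e3 := (hPM i k hi hk (Ne.symm hkl)).2
                    linarith
                  · have e2 := hM3 i k l hi hk hl hik hil hkl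
                    linarith
          · by_cases hk : k = 0
            · subst hk
              have hl : l ≠ 0 := Ne.symm hkl
              have e1 := hsym (b i) (b j) (b 0) (b l)
              rcases eq_or_ne l i with rfl | hli
              · have e2 := (hPM l j hl hj hij).2
                linarith
              · rcases eq_or_ne l j with rfl | hlj
                · have e2 := ha2 (b 0) (b l) (b i) (b l)
                  have e3 := (hPM l i hl hi hli).2
                  linarith
                · have e2 := hM3 l i j hl hi hj hli hlj hij
                  linarith
            · by_cases hl : l = 0
              · subst hl
                have e1 := ha2 (b i) (b j) (b k) (b 0)
                have e2 := hsym (b i) (b j) (b 0) (b k)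
                rcases eq_or_ne k i with rfl | hki
                · have e3 := (hPM k j hk hj hij).2
                  linarith
                · rcases eq_or_ne k j with rfl | hkj
                  · have e3 := ha2 (b 0) (b k) (b i) (b k)
                    have e4 := (hPM k i hk hi hki).2
                    linarith
                  · have e3 := hM3 k i j hk hi hj hki hkj hij
                    linarith
              · -- all four indices nonzero
                rcases eq_or_ne i k with rfl | hik
                · have hjl : j ≠ l := fun h => hnc1 ⟨rfl, h⟩
                  exact hR' i j l hi hj hl hij hkl hjl
                · rcases eq_or_ne i l with rfl | hil
                  · have hjk : j ≠ k := fun h => hnc2 ⟨rfl, h⟩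
                    have e1 := ha2 (b i) (b j) (b k) (b i)
                    have e2 := hR' i j k hi hj hk hij (Ne.symm hkl) hjk
                    linarith
                  · rcases eq_or_ne j k with rfl | hjk
                    · have e1 := ha1 (b i) (b j) (b j) (b l)
                      have e2 := hR' j i l hj hi hl (Ne.symm hij) hkl hil
                      linarith
                    · rcases eq_or_ne j l with rfl | hjl
                      · have e1 := hswapboth (b i) (b j) (b k) (b j)
                        have e2 := hR' j i k hj hi hk (Ne.symm hij) (Ne.symm hkl) hik
                        linarith
                      · exact hF7 i j k l hi hj hk hl hij hik hil hjk hjl hkl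
      -- all basis components agree with the model tensor
      have hcomp : ∀ i j k l : Fin (m + 2), F (b i) (b j) (b k) (b l)
          = K * (g (b i) (b k) * g (b j) (b l) - g (b j) (b k) * g (b i) (b l)) := by
        intro i j k l
        rcases eq_or_ne i j with rfl | hij
        · rw [hxx]; ring
        · rcases eq_or_ne k l with rfl | hkl
          · rw [hzz]; ring
          · by_cases hc1 : i = k ∧ j = l
            · obtain ⟨rfl, rfl⟩ := hc1
              by_cases hi : i = 0
              · subst hi
                have hj : j ≠ 0 := Ne.symm hij
                have e := hP j hj
                simp [hb, hj, Ne.symm hj, hij, Ne.symm hij]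
                linarith
              · by_cases hj : j = 0
                · subst hj
                  have e1 := hswapboth (b i) (b 0) (b i) (b 0)
                  have e2 := hP i hi
                  simp [hb, hi, Ne.symm hi, hij, Ne.symm hij]
                  linarith
                · have e := hR i j hi hj hij
                  simp [hb, hi, hj, hij, Ne.symm hij]
                  linarith
            · by_cases hc2 : i = l ∧ j = k
              · obtain ⟨rfl, rfl⟩ := hc2
                have e0 := ha2 (b i) (b j) (b j) (b i)
                by_cases hi : i = 0
                · subst hi
                  have hj : j ≠ 0 := Ne.symm hij
                  have e1 := hswapboth (b 0) (b j) (b 0) (b j)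
                  have e2 := hP j hj
                  simp [hb, hj, Ne.symm hj, hij, Ne.symm hij]
                  linarith
                · by_cases hj : j = 0
                  · subst hj
                    have e1 := hswapboth (b i) (b 0) (b i) (b 0)
                    have e2 := hP i hi
                    simp [hb, hi, Ne.symm hi, hij, Ne.symm hij]
                    linarith
                  · have e := hR i j hi hj hij
                    simp [hb, hi, hj, hij, Ne.symm hij]
                    linarith
              · have hz := hzero i j k l hij hkl hc1 hc2
                have hr1 : g (b i) (b k) * g (b j) (b l) = 0 := by
                  rcases eq_or_ne i k with h | h
                  · have hjl : j ≠ l := fun hh => hc1 ⟨h, hh⟩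
                    rw [hb j l, if_neg hjl, mul_zero]
                  · rw [hb i k, if_neg h, zero_mul]
                have hr2 : g (b j) (b k) * g (b i) (b l) = 0 := by
                  rcases eq_or_ne j k with h | h
                  · have hil : i ≠ l := fun hh => hc2 ⟨hh, h⟩
                    rw [hb i l, if_neg hil, mul_zero]
                  · rw [hb j k, if_neg h, zero_mul]
                rw [hz, hr1, hr2]; ring
      -- extend from basis vectors to all vectors, one slot at a time
      have hmem : ∀ v : V, v ∈ Submodule.span ℝ (Set.range b) := by
        intro v; rw [b.span_eq]; trivial
      have L4 : ∀ (i j k : Fin (m + 2)) (w : V), F (b i) (b j) (b k) w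
          = K * (g (b i) (b k) * g (b j) w - g (b j) (b k) * g (b i) w) := by
        intro i j k w
        refine Submodule.span_induction ?_ ?_ ?_ ?_ (hmem w)
        · rintro _ ⟨l, rfl⟩; exact hcomp i j k l
        · simp
        · intro a c _ _ ha hc
          simp only [map_add, LinearMap.add_apply]
          linear_combination ha + hc
        · intro t a _ ha
          simp only [map_smul, LinearMap.smul_apply, smul_eq_mul]
          linear_combination t * ha
      have L3 : ∀ (i j : Fin (m + 2)) (z w : V), F (b i) (b j) z w
          = K * (g (b i) z * g (b j) w - g (b j) z * g (b i) w) := by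
        intro i j z w
        refine Submodule.span_induction (p := fun z _ => ∀ w : V, F (b i) (b j) z w
          = K * (g (b i) z * g (b j) w - g (b j) z * g (b i) w)) ?_ ?_ ?_ ?_ (hmem z) w
        · rintro _ ⟨k, rfl⟩ w; exact L4 i j k w
        · intro w; simp
        · intro a c _ _ ha hc w
          simp only [map_add, LinearMap.add_apply]
          linear_combination ha w + hc w
        · intro t a _ ha w
          simp only [map_smul, LinearMap.smul_apply, smul_eq_mul]
          linear_combination t * ha w
      have L2 : ∀ (i : Fin (m + 2)) (y z w : V), F (b i) y z w
          = K * (g (b i) z * g y w - g y z * g (b i) w) := by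
        intro i y z w
        refine Submodule.span_induction (p := fun y _ => ∀ z w : V, F (b i) y z w
          = K * (g (b i) z * g y w - g y z * g (b i) w)) ?_ ?_ ?_ ?_ (hmem y) z w
        · rintro _ ⟨j, rfl⟩ z w; exact L3 i j z w
        · intro z w; simp
        · intro a c _ _ ha hc z w
          simp only [map_add, LinearMap.add_apply]
          linear_combination ha z w + hc z w
        · intro t a _ ha z w
          simp only [map_smul, LinearMap.smul_apply, smul_eq_mul]
          linear_combination t * ha z w
      refine ⟨K, fun x y z w => ?_⟩
      refine Submodule.span_induction (p := fun x _ => ∀ y z w : V, F x y z w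
        = K * (g x z * g y w - g y z * g x w)) ?_ ?_ ?_ ?_ (hmem x) y z w
      · rintro _ ⟨i, rfl⟩ y z w; exact L2 i y z w
      · intro y z w; simp
      · intro a c _ _ ha hc y z w
        simp only [map_add, LinearMap.add_apply]
        linear_combination ha y z w + hc y z w
      · intro t a _ ha y z w
        simp only [map_smul, LinearMap.smul_apply, smul_eq_mul]
        linear_combination t * ha y z w
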